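/- arXiv:2510.18051 — 2 statements merged into one kernel-verified Lean document; each statement's English description precedes it below -/
import Mathlib

section
/- Perlis–Walker theorem for cyclic groups: for a finite cyclic group C_n, there is a ℚ-algebra isomorphism ℚ[C_n] ≅ ∏_{d ∣ n} ℚ(ζ_d), the product over all positive divisors d of n of the d-th cyclotomic fields. -/
open Polynomial

noncomputable section
variable (n : ℕ+)

abbrev Aq := AdjoinRoot (X ^ (n:ℕ) - 1 : ℚ[X])

lemma root_pow : (AdjoinRoot.root (X ^ (n:ℕ) - 1 : ℚ[X])) ^ (n:ℕ) = 1 := by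
  have := AdjoinRoot.eval₂_root (X ^ (n:ℕ) - 1 : ℚ[X])
  simpa [sub_eq_zero] using this

def uroot : (Aq n)ˣ := (IsUnit.of_pow_eq_one (root_pow n) n.ne_zero).unit

lemma uroot_pow : (uroot n) ^ (n:ℕ) = 1 := by
  ext
  simp [uroot, root_pow]

def ghom : Multiplicative (ZMod (n:ℕ)) →* (Aq n)ˣ :=
  (MulEquiv.multiplicativeAdditive (Aq n)ˣ).toMonoidHom.comp
    (AddMonoidHom.toMultiplicative
      (ZMod.lift (n:ℕ) ⟨(zmultiplesHom (Additive (Aq n)ˣ)) (Additive.ofMul (uroot n)), by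
        simp [← ofMul_pow, uroot_pow]⟩))

lemma ghom_int (k : ℤ) : ghom n (Multiplicative.ofAdd ((k : ℤ) : ZMod (n:ℕ))) = uroot n ^ k := by
  show (MulEquiv.multiplicativeAdditive (Aq n)ˣ) (AddMonoidHom.toMultiplicative _ (Multiplicative.ofAdd ((k : ℤ) : ZMod (n:ℕ)))) = _
  rw [AddMonoidHom.toMultiplicative_apply_apply]
  rw [show Multiplicative.toAdd (Multiplicative.ofAdd ((k : ℤ) : ZMod (n:ℕ))) = ((k : ℤ) : ZMod (n:ℕ)) from rfl]
  rw [ZMod.lift_coe]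
  rfl

lemma ghom_one : ghom n (Multiplicative.ofAdd (1 : ZMod (n:ℕ))) = uroot n := by
  have h := ghom_int n 1
  simpa using h

/-- the forward algebra hom -/
def φ : MonoidAlgebra ℚ (Multiplicative (ZMod (n:ℕ))) →ₐ[ℚ] Aq n :=
  MonoidAlgebra.lift ℚ _ _ ((Units.coeHom (Aq n)).comp (ghom n))

lemma φ_of_one : φ n (MonoidAlgebra.of ℚ _ (Multiplicative.ofAdd (1 : ZMod (n:ℕ))))
    = AdjoinRoot.root _ := by
  simp [φ, ghom_one, uroot]

def xgen : MonoidAlgebra ℚ (Multiplicative (ZMod (n:ℕ))) :=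
  MonoidAlgebra.of ℚ _ (Multiplicative.ofAdd (1 : ZMod (n:ℕ)))

lemma xgen_pow : (xgen n) ^ (n:ℕ) = 1 := by
  rw [xgen, ← map_pow, ← ofAdd_nsmul]
  simp [MonoidAlgebra.one_def]

lemma aeval_xgen : (aeval (xgen n)) (X ^ (n:ℕ) - 1 : ℚ[X]) = 0 := by
  simp [xgen_pow, sub_eq_zero]

/-- the reverse algebra hom -/
def ψ : Aq n →ₐ[ℚ] MonoidAlgebra ℚ (Multiplicative (ZMod (n:ℕ))) :=
  AdjoinRoot.liftAlgHom (X ^ (n:ℕ) - 1 : ℚ[X]) (Algebra.ofId ℚ _) (xgen n) (aeval_xgen n)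

lemma ψ_root : ψ n (AdjoinRoot.root _) = xgen n := AdjoinRoot.liftAlgHom_root _ _ _ _

lemma comp1 : (φ n).comp (ψ n) = AlgHom.id ℚ (Aq n) := by
  apply AdjoinRoot.algHom_ext
  rw [AlgHom.comp_apply, ψ_root, AlgHom.id_apply]
  exact φ_of_one n

lemma comp2 : (ψ n).comp (φ n) = AlgHom.id ℚ _ := by
  refine MonoidAlgebra.algHom_ext ?_ (Subsingleton.elim _ _)
  intro g
  haveI : NeZero (n:ℕ) := ⟨n.ne_zero⟩
  obtain ⟨k, hk⟩ : ∃ k : ℕ, ((k:ℕ) : ZMod (n:ℕ)) = Multiplicative.toAdd g :=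
    ZMod.natCast_rightInverse.surjective _
  have hg : MonoidAlgebra.of ℚ (Multiplicative (ZMod (n:ℕ))) g = (xgen n) ^ k := by
    rw [xgen, ← map_pow, ← ofAdd_nsmul]
    congr 1
    rw [nsmul_eq_mul, mul_one, hk]
    rfl
  have hsingle : (MonoidAlgebra.single g 1 : MonoidAlgebra ℚ (Multiplicative (ZMod (n:ℕ)))) = MonoidAlgebra.of ℚ _ g := rfl
  rw [AlgHom.comp_apply, AlgHom.id_apply, hsingle, hg, map_pow, map_pow]
  congr 1
  rw [show φ n (xgen n) = AdjoinRoot.root _ from φ_of_one n]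
  exact ψ_root n

def E1 : MonoidAlgebra ℚ (Multiplicative (ZMod (n:ℕ))) ≃ₐ[ℚ] Aq n :=
  AlgEquiv.ofAlgHom (φ n) (ψ n) (comp1 n) (comp2 n)


-- Step B

def cyc (d : (n:ℕ).divisors) : ℚ[X] := cyclotomic d ℚ

open Function in
lemma cyc_pairwise : Pairwise (IsCoprime on fun d : (n:ℕ).divisors => Ideal.span {cyc n d}) := by
  intro i j hij
  rw [Function.onFun, Ideal.isCoprime_span_singleton_iff]
  exact cyclotomic.isCoprime_rat (fun he => hij (Subtype.ext he))

lemma span_eq : Ideal.span {(X ^ (n:ℕ) - 1 : ℚ[X])}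
    = ⨅ d : (n:ℕ).divisors, Ideal.span {cyc n d} := by
  rw [Ideal.iInf_span_singleton (I := fun d : (n:ℕ).divisors => cyc n d)
    (fun i j h => by
      rw [← Ideal.isCoprime_span_singleton_iff]
      exact cyc_pairwise n h)]
  congr 1
  congr 1
  simp only [cyc]
  rw [Finset.prod_coe_sort ((n:ℕ).divisors) (fun d => cyclotomic d ℚ)]
  exact (prod_cyclotomic_eq_X_pow_sub_one n.pos ℚ).symm

def E2 : Aq n ≃ₐ[ℚ] ∀ d : (n:ℕ).divisors, AdjoinRoot (cyc n d) :=
  (Ideal.quotientEquivAlgOfEq ℚ (span_eq n)).trans <|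
    AlgEquiv.ofRingEquiv (f := Ideal.quotientInfRingEquivPiQuotient _ (cyc_pairwise n))
      (fun r => by
        ext d
        rfl)

-- Step C
open IsCyclotomicExtension in
def E3 (d : (n:ℕ).divisors) :
    AdjoinRoot (cyc n d) ≃ₐ[ℚ] CyclotomicField (d : ℕ) ℚ := by
  have dp : 0 < (d:ℕ) := Nat.pos_of_mem_divisors d.2
  haveI : Fact (Irreducible (cyclotomic (d:ℕ) ℚ)) := ⟨cyclotomic.irreducible_rat dp⟩
  haveI : Fact (Irreducible (cyc n d)) := ⟨cyclotomic.irreducible_rat dp⟩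
  set L := AdjoinRoot (cyc n d)
  have hroot : IsRoot (cyclotomic (d:ℕ) L) (AdjoinRoot.root (cyc n d)) := by
    have := AdjoinRoot.isRoot_root (cyc n d)
    rwa [cyc, map_cyclotomic] at this
  haveI : NeZero ((d:ℕ) : L) := ⟨by exact_mod_cast Nat.cast_ne_zero.2 dp.ne'⟩
  have hprim : IsPrimitiveRoot (AdjoinRoot.root (cyc n d)) (d:ℕ) :=
    (isRoot_cyclotomic_iff).1 hroot
  haveI : IsCyclotomicExtension {(d:ℕ)} ℚ L := by
    rw [iff_adjoin_eq_top]
    refine ⟨fun m hm _ => ⟨AdjoinRoot.root (cyc n d), ?_⟩, ?_⟩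
    · rw [Set.mem_singleton_iff] at hm
      subst hm
      exact hprim
    · rw [eq_top_iff]; refine le_trans (AdjoinRoot.adjoinRoot_eq_top (f := cyc n d)).ge ?_
      apply Algebra.adjoin_mono
      rintro x rfl
      exact ⟨(d:ℕ), Set.mem_singleton _, dp.ne', by
        simpa using hprim.pow_eq_one⟩
  haveI : NeZero (d:ℕ) := ⟨dp.ne'⟩
  haveI : NeZero ((d:ℕ) : ℚ) := ⟨Nat.cast_ne_zero.2 dp.ne'⟩
  exact @IsCyclotomicExtension.algEquiv {(d:ℕ)} ℚ L _ _ _ _ (CyclotomicField (d:ℕ) ℚ) _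
    (CyclotomicField.algebra (d:ℕ) ℚ) (CyclotomicField.isCyclotomicExtension (d:ℕ) ℚ)

end

/-- Perlis–Walker theorem for cyclic groups: `ℚ[C_n] ≅ ∏_{d ∣ n} ℚ(ζ_d)` as ℚ-algebras. -/
theorem stmt_14 (n : ℕ+) :
    Nonempty (MonoidAlgebra ℚ (Multiplicative (ZMod n)) ≃ₐ[ℚ]
      ((d : (n : ℕ).divisors) →
        CyclotomicField (d : ℕ) ℚ)) := by
  exact ⟨((E1 n).trans (E2 n)).trans (AlgEquiv.piCongrRight (fun d => E3 n d))⟩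
end

section
/- Let G = A ∗_C B be an amalgamated free product. Then every finite subgroup of G is conjugate in G to a subgroup of A or to a subgroup of B. -/
open Monoid Monoid.PushoutI Monoid.PushoutI.NormalWord Monoid.CoprodI Subgroup Function List

namespace AmalgamFin

variable {G : Bool → Type*} [∀ i, Group (G i)] {H : Type*} [Group H]
  {φ : ∀ i, H →* G i} (d : Transversal φ)

abbrev P (φ : ∀ i : Bool, H →* G i) := Monoid.PushoutI φ

/-- evaluation of a list of letters -/
def eval (φ : ∀ i : Bool, H →* G i) (l : List (Σ i : Bool, G i)) : P φ :=
  (l.map fun p => of (φ := φ) p.1 p.2).prod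

/-- a reduced word: types alternate and no letter is in the image of the base -/
def IsRed (φ : ∀ i : Bool, H →* G i) (l : List (Σ i : Bool, G i)) : Prop :=
  (l.map Sigma.fst).IsChain (· ≠ ·) ∧ ∀ p ∈ l, p.2 ∉ (φ p.1).range

theorem eval_nil : eval φ [] = 1 := rfl

theorem eval_cons (p : (Σ i : Bool, G i)) (l : List (Σ i : Bool, G i)) :
    eval φ (p :: l) = of (φ := φ) p.1 p.2 * eval φ l := by
  simp [eval]

theorem eval_append (l₁ l₂ : List (Σ i : Bool, G i)) :
    eval φ (l₁ ++ l₂) = eval φ l₁ * eval φ l₂ := by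
  simp [eval]

theorem eval_singleton (p : (Σ i : Bool, G i)) :
    eval φ [p] = of (φ := φ) p.1 p.2 := by
  simp [eval]

theorem of_mul_base (i : Bool) (g : G i) (c : H) :
    of (φ := φ) i g * base φ c = of (φ := φ) i (g * φ i c) := by
  rw [← of_apply_eq_base φ i c, ← map_mul]

theorem base_mul_of (i : Bool) (g : G i) (c : H) :
    base φ c * of (φ := φ) i g = of (φ := φ) i (φ i c * g) := by
  rw [← of_apply_eq_base φ i c, ← map_mul]

/-- absorb a base element into the first letter -/
def absorbL (φ : ∀ i : Bool, H →* G i) (c : H) :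
    List (Σ i : Bool, G i) → List (Σ i : Bool, G i)
  | [] => []
  | p :: t => ⟨p.1, φ p.1 c * p.2⟩ :: t

/-- absorb a base element into the last letter -/
def absorbR (φ : ∀ i : Bool, H →* G i) (c : H) :
    List (Σ i : Bool, G i) → List (Σ i : Bool, G i)
  | [] => []
  | [p] => [⟨p.1, p.2 * φ p.1 c⟩]
  | p :: q :: t => p :: absorbR φ c (q :: t)

@[simp] theorem absorbL_map_fst (c : H) (l : List (Σ i : Bool, G i)) :
    (absorbL φ c l).map Sigma.fst = l.map Sigma.fst := by
  cases l with
  | nil => rfl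
  | cons p t => rfl

@[simp] theorem absorbR_map_fst (c : H) (l : List (Σ i : Bool, G i)) :
    (absorbR φ c l).map Sigma.fst = l.map Sigma.fst := by
  induction l with
  | nil => rfl
  | cons p t ih =>
    cases t with
    | nil => rfl
    | cons q r => simpa [absorbR] using ih

theorem notin_range_of_mul_left {i : Bool} (c : H) {g : G i}
    (hg : g ∉ (φ i).range) : φ i c * g ∉ (φ i).range := by
  intro ⟨x, hx⟩
  exact hg ⟨c⁻¹ * x, by rw [map_mul, map_inv, hx]; group⟩

theorem notin_range_of_mul_right {i : Bool} (c : H) {g : G i}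
    (hg : g ∉ (φ i).range) : g * φ i c ∉ (φ i).range := by
  intro ⟨x, hx⟩
  exact hg ⟨x * c⁻¹, by rw [map_mul, map_inv, hx]; group⟩

theorem isRed_absorbL (c : H) {l : List (Σ i : Bool, G i)} (hl : IsRed φ l) :
    IsRed φ (absorbL φ c l) := by
  obtain ⟨h1, h2⟩ := hl
  refine ⟨by rwa [absorbL_map_fst], ?_⟩
  cases l with
  | nil => simpa [absorbL] using h2
  | cons p t =>
    rintro q hq
    rcases List.mem_cons.1 hq with rfl | hq
    · exact notin_range_of_mul_left c (h2 p (List.mem_cons_self))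
    · exact h2 q (List.mem_cons_of_mem _ hq)

theorem isRed_absorbR (c : H) {l : List (Σ i : Bool, G i)} (hl : IsRed φ l) :
    IsRed φ (absorbR φ c l) := by
  obtain ⟨h1, h2⟩ := hl
  refine ⟨by rwa [absorbR_map_fst], ?_⟩
  clear h1
  induction l with
  | nil => simpa [absorbR] using h2
  | cons p t ih =>
    cases t with
    | nil =>
      rintro q hq
      simp only [absorbR, List.mem_singleton] at hq
      subst hq
      exact notin_range_of_mul_right c (h2 p (List.mem_cons_self))
    | cons q r =>
      rintro s hs
      rcases List.mem_cons.1 hs with rfl | hs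
      · exact h2 s (List.mem_cons_self)
      · exact ih (fun p hp => h2 p (List.mem_cons_of_mem _ hp)) s hs

theorem eval_absorbL (c : H) {l : List (Σ i : Bool, G i)} (hne : l ≠ []) :
    eval φ (absorbL φ c l) = base φ c * eval φ l := by
  cases l with
  | nil => exact absurd rfl hne
  | cons p t => rw [absorbL, eval_cons, eval_cons, ← mul_assoc, ← base_mul_of]

theorem eval_absorbR (c : H) {l : List (Σ i : Bool, G i)} (hne : l ≠ []) :
    eval φ (absorbR φ c l) = eval φ l * base φ c := by
  induction l with
  | nil => exact absurd rfl hne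
  | cons p t ih =>
    cases t with
    | nil => simp [absorbR, eval_singleton, of_mul_base]
    | cons q r =>
      rw [absorbR, eval_cons, eval_cons, ih (by simp), mul_assoc]

/-- build a `CoprodI.Word` from a reduced list -/
def toRedWord {l : List (Σ i : Bool, G i)} (hl : IsRed φ l) : CoprodI.Word G where
  toList := l
  ne_one := fun p hp h1 => hl.2 p hp (h1 ▸ ⟨1, map_one _⟩)
  chain_ne := (List.isChain_map Sigma.fst).1 hl.1

theorem toRedWord_reduced {l : List (Σ i : Bool, G i)} (hl : IsRed φ l) :
    Monoid.PushoutI.Reduced φ (toRedWord hl) :=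
  fun p hp => hl.2 p hp

theorem ofCoprodI_wordProd (l : List (Σ i : Bool, G i)) :
    ofCoprodI ((l.map fun p => CoprodI.of p.2).prod : Monoid.CoprodI G) = eval φ l := by
  rw [eval, map_list_prod]
  congr 1
  simp only [List.map_map]
  exact List.map_congr_left fun p _ => by simp [Function.comp, ofCoprodI_of]

theorem eval_toRedWord {l : List (Σ i : Bool, G i)} (hl : IsRed φ l) :
    ofCoprodI (toRedWord hl).prod = eval φ l :=
  ofCoprodI_wordProd l

include d in
theorem eval_notin_base {l : List (Σ i : Bool, G i)} (hl : IsRed φ l) (hne : l ≠ []) :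
    eval φ l ∉ (base φ).range := by
  intro hmem
  have := Monoid.PushoutI.Reduced.eq_empty_of_mem_range d.injective (toRedWord_reduced hl)
    (by rwa [eval_toRedWord])
  apply hne
  have : (toRedWord hl).toList = ([] : List (Σ i : Bool, G i)) := by rw [this]; rfl
  exact this

include d in
/-- uniqueness of the type sequence of a representation -/
theorem ts_unique {l₁ l₂ : List (Σ i : Bool, G i)} (h₁ : IsRed φ l₁) (h₂ : IsRed φ l₂)
    {c₁ c₂ : H} (he : eval φ l₁ * base φ c₁ = eval φ l₂ * base φ c₂) :
    l₁.map Sigma.fst = l₂.map Sigma.fst := by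
  classical
  have he' : eval φ l₁ = eval φ l₂ * base φ (c₂ * c₁⁻¹) := by
    rw [map_mul]
    rw [← mul_assoc]
    rw [← he]
    simp [mul_assoc, ← map_mul]
  rcases eq_or_ne l₂ [] with rfl | hne₂
  · rcases eq_or_ne l₁ [] with rfl | hne₁
    · rfl
    · exact absurd ⟨c₂ * c₁⁻¹, by rw [he', eval_nil, one_mul]⟩ (eval_notin_base d h₁ hne₁)
  · have h₂' := isRed_absorbR (φ := φ) (c₂ * c₁⁻¹) h₂
    have he'' : eval φ l₁ = eval φ (absorbR φ (c₂ * c₁⁻¹) l₂) := by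
      rw [eval_absorbR _ hne₂, he']
    rcases eq_or_ne l₁ [] with rfl | hne₁
    · exfalso
      refine eval_notin_base d h₂' ?_ ⟨1, by rw [map_one, ← he'', eval_nil]⟩
      intro h
      apply hne₂
      have := congrArg (List.map Sigma.fst) h
      rw [absorbR_map_fst] at this
      simpa using this
    · -- both nonempty: compare normal words
      obtain ⟨w₁, hw₁, hm₁⟩ :=
        (toRedWord_reduced h₁).exists_normalWord_prod_eq d
      obtain ⟨w₂, hw₂, hm₂⟩ :=
        (toRedWord_reduced h₂').exists_normalWord_prod_eq d
      have : w₁.prod = w₂.prod := by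
        rw [hw₁, hw₂, eval_toRedWord, eval_toRedWord, ← he'']
      have hw : w₁ = w₂ := Monoid.PushoutI.NormalWord.prod_injective this
      have : l₁.map Sigma.fst = (absorbR φ (c₂ * c₁⁻¹) l₂).map Sigma.fst := by
        change (toRedWord h₁).toList.map Sigma.fst = (toRedWord h₂').toList.map Sigma.fst
        rw [← hm₁, ← hm₂, hw]
      rwa [absorbR_map_fst] at this

end AmalgamFin
-- part3: appended to part2
namespace AmalgamFin

open Monoid Monoid.PushoutI Monoid.PushoutI.NormalWord Monoid.CoprodI Subgroup Function List

variable {G : Bool → Type*} [∀ i, Group (G i)] {H : Type*} [Group H]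
  {φ : ∀ i, H →* G i} (d : Transversal φ)

theorem notin_range_of_mem_set {i : Bool} {g : G i} (hset : g ∈ d.set i) (h1 : g ≠ 1) :
    g ∉ (φ i).range := by
  intro hmem
  have hu := (d.compl i).existsUnique g
  obtain ⟨x, -, hx⟩ := hu
  have e1 := hx (⟨g, hmem⟩, ⟨1, d.one_mem i⟩) (by simp)
  have e2 := hx (⟨1, Subgroup.one_mem _⟩, ⟨g, hset⟩) (by simp)
  apply h1
  have e3 := e1.trans e2.symm
  have := congrArg (fun y => (y.2 : G i)) e3
  simpa using this.symm

theorem ofCoprodI_wordProd' (w : CoprodI.Word G) :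
    ofCoprodI (w.prod) = eval φ w.toList := by
  rw [Word.prod, ofCoprodI_wordProd]

include d in
theorem exists_rep (g : P φ) : ∃ l, IsRed φ l ∧ ∃ c, g = eval φ l * base φ c := by
  classical
  set w : NormalWord d := equiv g with hw
  have hg : g = w.prod := by
    have : w.prod = (equiv (d := d)).symm w := rfl
    rw [this, hw, Equiv.symm_apply_apply]
  have hprod : w.prod = base φ w.head * eval φ w.toList := by
    rw [show w.prod = base φ w.head * ofCoprodI (Word.prod w.toWord) from rfl,
      ofCoprodI_wordProd']
  have hred : IsRed φ w.toList := by
    constructor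
    · exact (List.isChain_map Sigma.fst).2 w.chain_ne
    · intro p hp
      exact notin_range_of_mem_set d (w.normalized p.1 p.2 hp) (w.ne_one p hp)
  rcases eq_or_ne w.toList [] with hnil | hne
  · refine ⟨[], ⟨by simp, by simp⟩, w.head, ?_⟩
    rw [hg, hprod, hnil]
    simp [eval_nil]
  · refine ⟨absorbL φ w.head w.toList, isRed_absorbL _ hred, 1, ?_⟩
    rw [hg, hprod, eval_absorbL _ hne, map_one, mul_one]

/-- canonical reduced list representing `g` -/
noncomputable def tsl (g : P φ) : List (Σ i : Bool, G i) := (exists_rep d g).choose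

theorem tsl_isRed (g : P φ) : IsRed φ (tsl d g) := (exists_rep d g).choose_spec.1

theorem tsl_spec (g : P φ) : ∃ c, g = eval φ (tsl d g) * base φ c :=
  (exists_rep d g).choose_spec.2

/-- the type sequence of an element -/
noncomputable def ts (g : P φ) : List Bool := (tsl d g).map Sigma.fst

theorem ts_spec {l : List (Σ i : Bool, G i)} (hl : IsRed φ l) {c : H} {g : P φ}
    (hg : g = eval φ l * base φ c) : ts d g = l.map Sigma.fst := by
  obtain ⟨c', hc'⟩ := tsl_spec d g
  exact ts_unique d (tsl_isRed d g) hl (by rw [← hc', ← hg])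

theorem ts_chain' (g : P φ) : (ts d g).IsChain (· ≠ ·) := (tsl_isRed d g).1

theorem ts_base (c : H) : ts d (base φ c) = [] :=
  ts_spec d (l := []) ⟨by simp, by simp⟩ (c := c) (by rw [eval_nil, one_mul])

theorem ts_one : ts d (1 : P φ) = [] := by
  have := ts_base d (1 : H)
  rwa [map_one] at this

theorem ts_letter {i : Bool} {a : G i} (ha : a ∉ (φ i).range) :
    ts d (of (φ := φ) i a) = [i] :=
  ts_spec d (l := [⟨i, a⟩])
    ⟨by simp, fun p hp => by rw [List.mem_singleton] at hp; subst hp; exact ha⟩ (c := 1)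
    (by rw [eval_singleton, map_one, mul_one])

theorem mem_of_range_iff (i : Bool) (g : P φ) :
    g ∈ (of (φ := φ) i).range ↔ ts d g = [] ∨ ts d g = [i] := by
  constructor
  · rintro ⟨a, rfl⟩
    by_cases ha : a ∈ (φ i).range
    · obtain ⟨x, rfl⟩ := ha
      left
      rw [of_apply_eq_base, ts_base]
    · right
      exact ts_letter d ha
  · intro h
    obtain ⟨c, hc⟩ := tsl_spec d g
    rcases h with h | h
    · have : tsl d g = [] := by simpa [ts] using h
      rw [this, eval_nil, one_mul] at hc
      exact ⟨φ i c, by rw [hc, of_apply_eq_base]⟩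
    · rw [ts] at h
      obtain ⟨p, t, hpt⟩ : ∃ p t, tsl d g = p :: t := by
        cases htl : tsl d g with
        | nil => rw [htl] at h; simp at h
        | cons p t => exact ⟨p, t, rfl⟩
      rw [hpt] at h
      simp only [List.map_cons, List.map_nil, List.cons.injEq] at h
      obtain ⟨hp1, ht⟩ := h
      have ht' : t = [] := by simpa using congrArg List.length ht
      subst ht'
      rw [hpt, eval_singleton] at hc
      subst hp1
      exact ⟨p.2 * φ p.1 c, by rw [map_mul, of_apply_eq_base, ← hc]⟩

/-- formal inverse of a reduced list -/
def invL (l : List (Σ i : Bool, G i)) : List (Σ i : Bool, G i) :=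
  (l.map fun p => ⟨p.1, p.2⁻¹⟩).reverse

@[simp] theorem invL_map_fst (l : List (Σ i : Bool, G i)) :
    (invL l).map Sigma.fst = (l.map Sigma.fst).reverse := by
  simp [invL, List.map_reverse, List.map_map, Function.comp]

theorem isRed_invL {l : List (Σ i : Bool, G i)} (hl : IsRed φ l) : IsRed φ (invL l) := by
  constructor
  · rw [invL_map_fst]
    exact List.isChain_reverse.2 (hl.1.imp fun a b h => h.symm)
  · intro p hp
    simp only [invL, List.mem_reverse, List.mem_map] at hp
    obtain ⟨q, hq, rfl⟩ := hp
    intro ⟨x, hx⟩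
    exact hl.2 q hq ⟨x⁻¹, by rw [map_inv, hx]; simp⟩

theorem eval_invL (l : List (Σ i : Bool, G i)) : eval φ (invL l) = (eval φ l)⁻¹ := by
  induction l with
  | nil => simp [invL, eval_nil]
  | cons p t ih =>
    rw [eval_cons, mul_inv_rev, ← ih]
    rw [invL, List.map_cons, List.reverse_cons, eval_append, eval_singleton]
    rfl

theorem ts_inv (g : P φ) : ts d g⁻¹ = (ts d g).reverse := by
  obtain ⟨c, hc⟩ := tsl_spec d g
  have hinv : g⁻¹ = base φ c⁻¹ * eval φ (invL (tsl d g)) :=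
    calc g⁻¹ = (eval φ (tsl d g) * base φ c)⁻¹ := by rw [← hc]
    _ = base φ c⁻¹ * eval φ (invL (tsl d g)) := by rw [mul_inv_rev, map_inv, eval_invL]
  rcases eq_or_ne (tsl d g) [] with hnil | hne
  · have h1 : ts d g = [] := by simp [ts, hnil]
    have h2 : g⁻¹ = base φ c⁻¹ := by rw [hinv, hnil, invL, List.map_nil, List.reverse_nil,
      eval_nil, mul_one]
    rw [h1, h2, ts_base]
    rfl
  · have hne' : invL (tsl d g) ≠ [] := by simp [invL, hne]
    have : g⁻¹ = eval φ (absorbL φ c⁻¹ (invL (tsl d g))) * base φ 1 := by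
      rw [eval_absorbL _ hne', map_one, mul_one, hinv]
    rw [ts_spec d (isRed_absorbL _ (isRed_invL (tsl_isRed d g))) this,
      absorbL_map_fst, invL_map_fst]
    rfl

end AmalgamFin
-- part4
namespace AmalgamFin

open Monoid Monoid.PushoutI Monoid.PushoutI.NormalWord Monoid.CoprodI Subgroup Function List

variable {G : Bool → Type*} [∀ i, Group (G i)] {H : Type*} [Group H]
  {φ : ∀ i, H →* G i} (d : Transversal φ)

theorem ts_mul_baseR (g : P φ) (c : H) : ts d (g * base φ c) = ts d g := by
  obtain ⟨l, hl, c', rfl⟩ := exists_rep d g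
  have h : eval φ l * base φ c' * base φ c = eval φ l * base φ (c' * c) := by
    rw [map_mul, mul_assoc]
  rw [ts_spec d hl h, ts_spec d hl rfl]

theorem ts_mul_baseL (g : P φ) (c : H) : ts d (base φ c * g) = ts d g := by
  obtain ⟨l, hl, c', rfl⟩ := exists_rep d g
  rw [ts_spec d hl rfl]
  rcases eq_or_ne l [] with rfl | hne
  · have h : base φ c * (eval φ [] * base φ c') = base φ (c * c') := by
      rw [eval_nil, one_mul, ← map_mul]
    rw [h, ts_base]
    rfl
  · have h : base φ c * (eval φ l * base φ c') = eval φ (absorbL φ c l) * base φ c' := by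
      rw [eval_absorbL _ hne, mul_assoc]
    rw [ts_spec d (isRed_absorbL _ hl) h, absorbL_map_fst]

/-- no-cancellation concatenation -/
theorem ts_mul_of_ne (a b : P φ)
    (hj : ∀ x ∈ (ts d a).getLast?, ∀ y ∈ (ts d b).head?, x ≠ y) :
    ts d (a * b) = ts d a ++ ts d b := by
  obtain ⟨la, hla, ca, rfl⟩ := exists_rep d a
  obtain ⟨lb, hlb, cb, rfl⟩ := exists_rep d b
  rw [ts_spec d hla rfl, ts_spec d hlb rfl] at hj ⊢
  rcases eq_or_ne lb [] with rfl | hneb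
  · have h : eval φ la * base φ ca * (eval φ [] * base φ cb)
        = eval φ la * base φ (ca * cb) := by
      rw [eval_nil, one_mul, map_mul, mul_assoc]
    rw [ts_spec d hla h]
    simp
  · have hb' : IsRed φ (absorbL φ ca lb) := isRed_absorbL _ hlb
    have h : eval φ la * base φ ca * (eval φ lb * base φ cb)
        = eval φ (la ++ absorbL φ ca lb) * base φ cb := by
      rw [eval_append, eval_absorbL _ hneb]
      simp [mul_assoc]
    have hred : IsRed φ (la ++ absorbL φ ca lb) := by
      constructor
      · rw [List.map_append, List.isChain_append]
        refine ⟨hla.1, hb'.1, ?_⟩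
        rw [absorbL_map_fst]
        exact hj
      · intro p hp
        rcases List.mem_append.1 hp with hp | hp
        · exact hla.2 p hp
        · exact hb'.2 p hp
    rw [ts_spec d hred h, List.map_append, absorbL_map_fst]

section Merge

variable {a b : P φ} {la' lb' : List (Σ i : Bool, G i)} {t : Bool} {α β : G t} {ca cb : H}

theorem merge_core (ha : a = eval φ (la' ++ [⟨t, α⟩]) * base φ ca)
    (hb : b = eval φ (⟨t, β⟩ :: lb') * base φ cb) :
    a * b = eval φ la' * (of (φ := φ) t (α * φ t ca * β) * (eval φ lb' * base φ cb)) := by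
  rw [ha, hb, eval_append, eval_singleton, eval_cons]
  have h : of (φ := φ) t α * (base φ ca * (of (φ := φ) t β * (eval φ lb' * base φ cb)))
      = of (φ := φ) t (α * φ t ca * β) * (eval φ lb' * base φ cb) := by
    rw [← mul_assoc, ← mul_assoc, of_mul_base, ← map_mul, mul_assoc]
  rw [← h]
  simp [mul_assoc]

/-- merge without absorption -/
theorem ts_mul_merge (hared : IsRed φ (la' ++ [⟨t, α⟩]))
    (hbred : IsRed φ (⟨t, β⟩ :: lb'))
    (ha : a = eval φ (la' ++ [⟨t, α⟩]) * base φ ca)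
    (hb : b = eval φ (⟨t, β⟩ :: lb') * base φ cb)
    (hz : α * φ t ca * β ∉ (φ t).range) :
    ts d (a * b) = la'.map Sigma.fst ++ t :: lb'.map Sigma.fst := by
  have h : a * b = eval φ (la' ++ ⟨t, α * φ t ca * β⟩ :: lb') * base φ cb := by
    rw [merge_core ha hb, eval_append, eval_cons]
    simp [mul_assoc]
  have hachain := hared.1
  rw [List.map_append, List.isChain_append] at hachain
  obtain ⟨hc1, -, hlast⟩ := hachain
  have hred : IsRed φ (la' ++ ⟨t, α * φ t ca * β⟩ :: lb') := by
    constructor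
    · rw [List.map_append, List.isChain_append]
      refine ⟨hc1, ?_, ?_⟩
      · exact hbred.1
      · intro x hx y hy
        apply hlast x hx
        simpa using hy
    · intro p hp
      rcases List.mem_append.1 hp with hp | hp
      · exact hared.2 p (List.mem_append_left _ hp)
      · rcases List.mem_cons.1 hp with rfl | hp
        · exact hz
        · exact hbred.2 p (List.mem_cons_of_mem _ hp)
  rw [ts_spec d hred h, List.map_append]
  rfl

/-- merge with absorption, empty left remainder -/
theorem ts_mul_absorb_left (hbred : IsRed φ (⟨t, β⟩ :: lb'))
    (ha : a = eval φ ([] ++ [⟨t, α⟩]) * base φ ca)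
    (hb : b = eval φ (⟨t, β⟩ :: lb') * base φ cb)
    {c' : H} (hz : α * φ t ca * β = φ t c') :
    ts d (a * b) = lb'.map Sigma.fst := by
  have h : a * b = base φ c' * (eval φ lb' * base φ cb) := by
    rw [merge_core ha hb, hz, of_apply_eq_base, eval_nil, one_mul]
  rcases eq_or_ne lb' [] with rfl | hne
  · have h2 : a * b = base φ (c' * cb) := by rw [h, eval_nil, one_mul, ← map_mul]
    rw [h2, ts_base]
    rfl
  · have h2 : a * b = eval φ (absorbL φ c' lb') * base φ cb := by
      rw [h, eval_absorbL _ hne, mul_assoc]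
    have hred : IsRed φ lb' := by
      constructor
      · exact (List.isChain_cons.1 (by simpa using hbred.1)).2
      · exact fun p hp => hbred.2 p (List.mem_cons_of_mem _ hp)
    rw [ts_spec d (isRed_absorbL _ hred) h2, absorbL_map_fst]

/-- merge with absorption, empty right remainder -/
theorem ts_mul_absorb_right (hared : IsRed φ (la' ++ [⟨t, α⟩]))
    (ha : a = eval φ (la' ++ [⟨t, α⟩]) * base φ ca)
    (hb : b = eval φ ([⟨t, β⟩] : List (Σ i : Bool, G i)) * base φ cb)
    {c' : H} (hz : α * φ t ca * β = φ t c') :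
    ts d (a * b) = la'.map Sigma.fst := by
  have h : a * b = eval φ la' * base φ (c' * cb) := by
    have h0 := merge_core (lb' := []) ha hb
    rw [h0, hz, of_apply_eq_base, eval_nil, one_mul, ← mul_assoc, map_mul, mul_assoc]
  have hred : IsRed φ la' := by
    constructor
    · have h1 := hared.1
      rw [List.map_append, List.isChain_append] at h1
      exact h1.1
    · exact fun p hp => hared.2 p (List.mem_append_left _ hp)
  rw [ts_spec d hred h]

end Merge

/-- extract a cons-representation from the type sequence -/
theorem exists_cons_rep {b : P φ} {t : Bool} {r : List Bool} (hts : ts d b = t :: r) :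
    ∃ (β : G t) (lb' : List (Σ i : Bool, G i)) (cb : H),
      IsRed φ (⟨t, β⟩ :: lb') ∧ b = eval φ (⟨t, β⟩ :: lb') * base φ cb ∧
        lb'.map Sigma.fst = r := by
  obtain ⟨cb, hcb⟩ := tsl_spec d b
  have hmap : (tsl d b).map Sigma.fst = t :: r := hts
  cases htl : tsl d b with
  | nil => rw [htl] at hmap; simp at hmap
  | cons p lb' =>
    rw [htl] at hmap
    simp only [List.map_cons, List.cons.injEq] at hmap
    obtain ⟨hp, hr⟩ := hmap
    obtain ⟨i, β⟩ := p
    cases hp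
    exact ⟨β, lb', cb, htl ▸ tsl_isRed d b, htl ▸ hcb, hr⟩

/-- extract a concat-representation from the type sequence -/
theorem exists_concat_rep {a : P φ} {t : Bool} {r : List Bool} (hts : ts d a = r ++ [t]) :
    ∃ (α : G t) (la' : List (Σ i : Bool, G i)) (ca : H),
      IsRed φ (la' ++ [⟨t, α⟩]) ∧ a = eval φ (la' ++ [⟨t, α⟩]) * base φ ca ∧
        la'.map Sigma.fst = r := by
  obtain ⟨ca, hca⟩ := tsl_spec d a
  have hmap : (tsl d a).map Sigma.fst = r ++ [t] := hts
  have hne : tsl d a ≠ [] := by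
    intro h
    rw [h] at hmap
    simp at hmap
  obtain ⟨la', q, hq⟩ : ∃ la' q, tsl d a = la' ++ [q] := by
    rcases List.eq_nil_or_concat (tsl d a) with h | ⟨la', q, h⟩
    · exact absurd h hne
    · rw [List.concat_eq_append] at h
      exact ⟨la', q, h⟩
  rw [hq, List.map_append] at hmap
  have hlen : (la'.map Sigma.fst).length = r.length := by
    have h2 := congrArg List.length hmap
    simp only [List.length_append, List.map_cons, List.map_nil, List.length_cons,
      List.length_nil] at h2
    simpa using h2
  obtain ⟨hr, hqq⟩ := List.append_inj hmap hlen
  simp only [List.map_cons, List.map_nil, List.cons.injEq] at hqq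
  obtain ⟨i, α⟩ := q
  cases hqq.1
  exact ⟨α, la', ca, hq ▸ tsl_isRed d a, hq ▸ hca, hr⟩

end AmalgamFin
-- part5 : delta, dV, parity
namespace AmalgamFin

open Monoid Monoid.PushoutI Monoid.PushoutI.NormalWord Monoid.CoprodI Subgroup Function List

variable {G : Bool → Type*} [∀ i, Group (G i)] {H : Type*} [Group H]
  {φ : ∀ i, H →* G i} (d : Transversal φ)

theorem head?_append_left {α : Type*} {l₁ : List α} (l₂ : List α) (h : l₁ ≠ []) :
    (l₁ ++ l₂).head? = l₁.head? := by
  cases l₁ with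
  | nil => exact absurd rfl h
  | cons a t => rfl

theorem getLast?_append_right {α : Type*} (l₁ : List α) {l₂ : List α} (h : l₂ ≠ []) :
    (l₁ ++ l₂).getLast? = l₂.getLast? := by
  rw [List.getLast?_append]
  cases hl : l₂.getLast? with
  | none => exact absurd (List.getLast?_eq_none_iff.1 hl) h
  | some b => rfl

theorem getLast?_cons_eq {α : Type*} (a : α) (l : List α) :
    (a :: l).getLast? = some (l.getLast?.getD a) := by
  induction l generalizing a with
  | nil => rfl
  | cons b t ih => rw [List.getLast?_cons_cons, ih b]; cases t <;> simp [ih]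

theorem absorbL_append (φ : ∀ i : Bool, H →* G i) (c : H)
    (l₁ l₂ : List (Σ i : Bool, G i)) (h : l₁ ≠ []) :
    absorbL φ c (l₁ ++ l₂) = absorbL φ c l₁ ++ l₂ := by
  cases l₁ with
  | nil => exact absurd rfl h
  | cons p t => rfl

theorem invL_cons (p : (Σ i : Bool, G i)) (l : List (Σ i : Bool, G i)) :
    invL (p :: l) = invL l ++ [(⟨p.1, p.2⁻¹⟩ : Σ i : Bool, G i)] := by
  simp [invL]

/-- combinatorial distance contribution of a type sequence -/
def delta (i j : Bool) : List Bool → ℕ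
  | [] => if i = j then 0 else 1
  | a :: r => r.length + (if a = i then 0 else 1) + (if r.getLast?.getD a = j then 0 else 1)

theorem delta_nil (i j : Bool) : delta i j [] = if i = j then 0 else 1 := rfl

theorem delta_pos_eq {i j : Bool} {l : List Bool} {a b : Bool}
    (h1 : l.head? = some a) (h2 : l.getLast? = some b) :
    delta i j l = (l.length - 1) + (if a = i then 0 else 1) + (if b = j then 0 else 1) := by
  cases l with
  | nil => simp at h1
  | cons c r =>
    have hc : c = a := by simpa using h1
    subst hc
    have hb : r.getLast?.getD c = b := by
      rw [getLast?_cons_eq] at h2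
      simpa using h2
    rw [delta, hb]
    simp

theorem delta_le_one_of_nil (i j : Bool) : delta i j [] ≤ 1 := by
  rw [delta_nil]; split <;> simp

/-- last letter of an alternating list -/
theorem alt_getLast {l : List Bool} (h : l.IsChain (· ≠ ·)) {a : Bool} (ha : l.head? = some a) :
    l.getLast? = some (if Even l.length then !a else a) := by
  induction l generalizing a with
  | nil => simp at ha
  | cons b r ih =>
    have hb : b = a := by simpa using ha
    subst hb
    cases r with
    | nil => simp
    | cons c r' =>
      have hc : c = !b := by
        have h2 := (List.isChain_cons_cons.1 h).1
        cases b <;> cases c <;> simp_all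
      subst hc
      rw [List.getLast?_cons_cons, ih (List.isChain_cons_cons.1 h).2 rfl]
      by_cases hp : Even r'.length <;>
        simp [List.length_cons, Nat.even_add_one, hp, Bool.not_not]

theorem delta_same_even (i : Bool) {l : List Bool} (h : l.IsChain (· ≠ ·)) :
    Even (delta i i l) := by
  cases hl : l.head? with
  | none =>
    have hnil : l = [] := by cases l with | nil => rfl | cons a r => simp at hl
    subst hnil
    simp [delta_nil]
  | some a =>
    have hne1 : 1 ≤ l.length := by
      cases l with | nil => simp at hl | cons c r => simp
    have hlast := alt_getLast h hl
    rcases Nat.even_or_odd l.length with he | ho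
    · have hb : l.getLast? = some (!a) := by rw [hlast, if_pos he]
      rw [delta_pos_eq hl hb, Nat.even_iff]
      have hx : (if a = i then 0 else 1) + (if (!a) = i then 0 else 1) = 1 := by
        cases a <;> cases i <;> simp
      rw [Nat.even_iff] at he
      omega
    · have hb : l.getLast? = some a := by rw [hlast, if_neg (Nat.not_even_iff_odd.2 ho)]
      rw [delta_pos_eq hl hb, Nat.even_iff]
      rw [Nat.odd_iff] at ho
      omega

/-- distance between vertices of the Bass-Serre tree -/
noncomputable def dV (u v : Bool × P φ) : ℕ := delta u.1 v.1 (ts d (u.2⁻¹ * v.2))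

theorem dV_translate (c : P φ) (u v : Bool × P φ) :
    dV d (u.1, c * u.2) (v.1, c * v.2) = dV d u v := by
  simp only [dV, mul_inv_rev]
  rw [mul_assoc, ← mul_assoc c⁻¹, inv_mul_cancel, one_mul]

theorem dV_same_even (i : Bool) (g h : P φ) : Even (dV d (i, g) (i, h)) :=
  delta_same_even i (ts_chain' d _)

theorem dV_eq_zero {i : Bool} {g h : P φ} (hz : dV d (i, g) (i, h) = 0) :
    g⁻¹ * h ∈ (of (φ := φ) i).range := by
  rw [mem_of_range_iff d]
  rw [dV] at hz
  cases hts : ts d (g⁻¹ * h) with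
  | nil => left; rfl
  | cons a r =>
    right
    rw [hts, delta] at hz
    have hr : r.length = 0 := by omega
    have ha : a = i := by
      by_contra hne
      rw [if_neg hne] at hz
      omega
    rw [List.length_eq_zero_iff] at hr
    rw [hr, ha]

end AmalgamFin
-- part6 : the key step lemma
namespace AmalgamFin

open Monoid Monoid.PushoutI Monoid.PushoutI.NormalWord Monoid.CoprodI Subgroup Function List

variable {G : Bool → Type*} [∀ i, Group (G i)] {H : Type*} [Group H]
  {φ : ∀ i, H →* G i} (d : Transversal φ)

theorem bool_opp {a b : Bool} (h : a ≠ b) : (!a) = b := by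
  cases a <;> cases b <;> simp_all

theorem ts_eq_nil_imp {x : P φ} (hx : ts d x = []) : ∃ c, x = base φ c := by
  obtain ⟨c, hc⟩ := tsl_spec d x
  have : tsl d x = [] := by
    have := hx
    rw [ts] at this
    exact List.map_eq_nil_iff.1 this
  rw [this, eval_nil, one_mul] at hc
  exact ⟨c, hc⟩

theorem keyT {i j : Bool} {h : P φ} (hd : 2 ≤ dV d (i, (1 : P φ)) (j, h)) :
    ∃ m : Bool × P φ, ∀ w : Bool × P φ,
      dV d m w + 1 ≤ dV d (i, (1 : P φ)) w ∨ dV d m w + 1 ≤ dV d (j, h) w := by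
  simp only [dV, inv_one, one_mul] at hd
  obtain ⟨t₁, r, hlh⟩ : ∃ t₁ r, ts d h = t₁ :: r := by
    cases hlh : ts d h with
    | nil =>
      rw [hlh] at hd
      have := delta_le_one_of_nil i j
      omega
    | cons t₁ r => exact ⟨t₁, r, rfl⟩
  set tn := r.getLast?.getD t₁ with htn
  have hlast : (t₁ :: r).getLast? = some tn := getLast?_cons_eq t₁ r
  rw [hlh, delta_pos_eq (i := i) (j := j) (l := t₁ :: r) (a := t₁) (b := tn) rfl hlast] at hd
  simp only [List.length_cons, Nat.add_sub_cancel] at hd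
  have hrev : ts d h⁻¹ = (t₁ :: r).reverse := by rw [ts_inv, hlh]
  have hrevhead : ((t₁ :: r).reverse).head? = some tn := by
    rw [List.head?_reverse, hlast]
  have hrevlast : ((t₁ :: r).reverse).getLast? = some t₁ := by
    rw [List.getLast?_reverse]
    rfl
  have hrevlen : ((t₁ :: r).reverse).length = r.length + 1 := by simp
  have notin_range_inv : ∀ {t : Bool} {g : G t}, g ∉ (φ t).range → g⁻¹ ∉ (φ t).range := by
    intro t g hg ⟨x, hx⟩
    exact hg ⟨x⁻¹, by rw [map_inv, hx, inv_inv]⟩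
  by_cases hti : t₁ = i
  · -- Case B : first letter of h has type i; move to the vertex (!i, of i β)
    subst hti
    rw [if_pos rfl, Nat.add_zero] at hd
    have hrlen : 1 ≤ r.length := by
      by_cases hj : tn = j
      · rw [if_pos hj] at hd; omega
      · rw [if_neg hj] at hd; omega
    have hrne : r ≠ [] := by
      intro h0; rw [h0] at hrlen; simp at hrlen
    have hch : (t₁ :: r).IsChain (· ≠ ·) := by rw [← hlh]; exact ts_chain' d h
    obtain ⟨β, lb', c, hbred, hb, hlb'⟩ := exists_cons_rep d hlh
    have hlbne : lb' ≠ [] := by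
      intro h0; rw [h0] at hlb'; exact hrne (by simpa using hlb'.symm)
    have hβ : β ∉ (φ t₁).range := hbred.2 ⟨t₁, β⟩ (List.mem_cons_self)
    have hβi : β⁻¹ ∉ (φ t₁).range := notin_range_inv hβ
    -- representation of h⁻¹ ending with the letter β⁻¹
    have hinvne : invL lb' ≠ [] := by simp [invL, hlbne]
    have hlistEq : absorbL φ c⁻¹ (invL (⟨t₁, β⟩ :: lb'))
        = absorbL φ c⁻¹ (invL lb') ++ [⟨t₁, β⁻¹⟩] := by
      rw [invL_cons, absorbL_append _ _ _ _ hinvne]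
    have haredInv : IsRed φ (absorbL φ c⁻¹ (invL lb') ++ [⟨t₁, β⁻¹⟩]) := by
      rw [← hlistEq]
      exact isRed_absorbL _ (isRed_invL hbred)
    have hbinv : h⁻¹ = eval φ (absorbL φ c⁻¹ (invL lb') ++ [⟨t₁, β⁻¹⟩]) * base φ 1 := by
      rw [← hlistEq, map_one, mul_one, eval_absorbL _ (by simp [invL]), eval_invL, hb,
        mul_inv_rev, map_inv]
    have hLa : (absorbL φ c⁻¹ (invL lb')).map Sigma.fst = r.reverse := by
      rw [absorbL_map_fst, invL_map_fst, hlb']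
    -- facts about r
    have hrlast : r.getLast? = some tn := by
      cases r with
      | nil => exact absurd rfl hrne
      | cons r0 rr =>
        rw [List.getLast?_cons_cons] at hlast
        exact hlast
    obtain ⟨t₂, rr, hrr⟩ : ∃ t₂ rr, r = t₂ :: rr := by
      cases r with
      | nil => exact absurd rfl hrne
      | cons t₂ rr => exact ⟨t₂, rr, rfl⟩
    have ht₂ : t₂ = !t₁ := by
      have := (List.isChain_cons_cons.1 (hrr ▸ hch)).1
      exact (bool_opp this).symm
    have hrevheadr : r.reverse.head? = some tn := by
      rw [List.head?_reverse, hrlast]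
    have hrevlastr : r.reverse.getLast? = some t₂ := by
      rw [List.getLast?_reverse, hrr]
      rfl
    have hrevlenr : r.reverse.length = r.length := by simp
    -- the midpoint vertex
    refine ⟨(!t₁, of (φ := φ) t₁ β), ?_⟩
    rintro ⟨wt, x⟩
    simp only [dV, inv_one, one_mul]
    rw [show ((of (φ := φ) t₁ β)⁻¹ : P φ) = of (φ := φ) t₁ β⁻¹ from (map_inv _ _).symm]
    have hifm : (if t₁ = !t₁ then (0:ℕ) else 1) = 1 := by cases t₁ <;> simp
    cases hlx : ts d x with
    | nil =>
      right
      obtain ⟨cx, rfl⟩ := ts_eq_nil_imp d hlx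
      have hts1 : ts d (of (φ := φ) t₁ β⁻¹ * base φ cx) = [t₁] := by
        rw [of_mul_base]
        exact ts_letter d (notin_range_of_mul_right _ hβi)
      have hts2 : ts d (h⁻¹ * base φ cx) = (t₁ :: r).reverse := by
        rw [ts_mul_baseR, hrev]
      rw [hts1, hts2, delta_pos_eq (i := !t₁) (j := wt) (l := [t₁]) (a := t₁) (b := t₁) rfl rfl,
        delta_pos_eq (i := j) (j := wt) hrevhead hrevlast, hrevlen, hifm]
      simp only [List.length_singleton]
      omega
    | cons s₁ rx =>
      by_cases hs : s₁ = t₁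
      · -- B3 : cancellation cases
        subst hs
        obtain ⟨y₁, lx', cx, hxred, hx, hlx'⟩ := exists_cons_rep d hlx
        have hpred : IsRed φ ([] ++ [⟨s₁, β⁻¹⟩]) := by
          refine ⟨by simp, ?_⟩
          intro p hp
          rw [List.nil_append, List.mem_singleton] at hp
          subst hp
          exact hβi
        have hp : of (φ := φ) s₁ β⁻¹ = eval φ ([] ++ [⟨s₁, β⁻¹⟩]) * base φ 1 := by
          rw [List.nil_append, eval_singleton, map_one, mul_one]
        by_cases hz : β⁻¹ * y₁ ∈ (φ s₁).range
        · -- B3b : absorption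
          obtain ⟨c', hc'⟩ := hz
          have hz' : β⁻¹ * φ s₁ 1 * y₁ = φ s₁ c' := by
            rw [map_one, mul_one, hc']
          have hts1 : ts d (of (φ := φ) s₁ β⁻¹ * x) = rx := by
            rw [ts_mul_absorb_left d hxred hp hx hz', hlx']
          cases hrx : rx with
          | nil =>
            have hlx'nil : lx' = [] := by
              rw [hrx] at hlx'
              exact List.map_eq_nil_iff.1 hlx'
            by_cases hwt : s₁ = wt
            · right
              have hts2 : ts d (h⁻¹ * x) = r.reverse := by
                rw [ts_mul_absorb_right d haredInv hbinv (by rw [hx, hlx'nil]) hz', hLa]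
              rw [hts1, hts2, hrx, delta_nil,
                delta_pos_eq (i := j) (j := wt) hrevheadr hrevlastr, hrevlenr]
              rw [if_neg (fun hh : (!s₁) = wt => by
                rw [← hwt] at hh
                exact absurd hh (by cases s₁ <;> simp))]
              rw [if_neg (fun hh : t₂ = wt => by
                rw [ht₂, ← hwt] at hh
                exact absurd hh (by cases s₁ <;> simp))]
              omega
            · left
              rw [hts1, hrx, delta_nil, if_pos (bool_opp hwt),
                delta_pos_eq (i := s₁) (j := wt) (l := [s₁]) (a := s₁) (b := s₁) rfl rfl,
                if_pos rfl, if_neg hwt]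
              simp
          | cons s₂ rx₂ =>
            left
            have hs₂ : s₂ = !s₁ := by
              have hchx : (s₁ :: rx).IsChain (· ≠ ·) := by rw [← hlx]; exact ts_chain' d x
              rw [hrx] at hchx
              exact (bool_opp (List.isChain_cons_cons.1 hchx).1).symm
            have hlast2 : rx.getLast? = some (rx₂.getLast?.getD s₂) := by
              rw [hrx]; exact getLast?_cons_eq s₂ rx₂
            have hlastlx : (s₁ :: rx).getLast? = some (rx₂.getLast?.getD s₂) := by
              rw [hrx, List.getLast?_cons_cons, ← hrx, hlast2]
            rw [hts1, hrx,
              delta_pos_eq (i := !s₁) (j := wt) (l := s₂ :: rx₂)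
                (a := s₂) (b := rx₂.getLast?.getD s₂) rfl (getLast?_cons_eq s₂ rx₂),
              delta_pos_eq (i := s₁) (j := wt) (l := s₁ :: s₂ :: rx₂)
                (a := s₁) (b := rx₂.getLast?.getD s₂) rfl (by rw [← hrx]; exact hlastlx)]
            rw [if_pos hs₂, if_pos rfl]
            simp only [List.length_cons]
            omega
        · -- B3a : merge without absorption
          have hz' : β⁻¹ * φ s₁ 1 * y₁ ∉ (φ s₁).range := by
            rw [map_one, mul_one]
            exact hz
          right
          have hts1 : ts d (of (φ := φ) s₁ β⁻¹ * x) = s₁ :: rx := by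
            rw [ts_mul_merge d hpred hxred hp hx hz', hlx']
            rfl
          have hts2 : ts d (h⁻¹ * x) = r.reverse ++ s₁ :: rx := by
            rw [ts_mul_merge d haredInv hxred hbinv hx hz', hLa, hlx']
          have hlastlx : (s₁ :: rx).getLast? = some (rx.getLast?.getD s₁) :=
            getLast?_cons_eq s₁ rx
          rw [hts1, hts2,
            delta_pos_eq (i := !s₁) (j := wt) (l := s₁ :: rx)
              (a := s₁) (b := rx.getLast?.getD s₁) rfl hlastlx,
            delta_pos_eq (i := j) (j := wt) (l := r.reverse ++ s₁ :: rx)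
              (a := tn) (b := rx.getLast?.getD s₁)
              (by rw [head?_append_left _ (by simp [hrne]), hrevheadr])
              (by rw [getLast?_append_right _ (by simp), hlastlx])]
          rw [hifm]
          simp only [List.length_append, List.length_cons, hrevlenr]
          omega
      · -- B2 : no cancellation, right disjunct
        right
        have hts0 : ts d (of (φ := φ) t₁ β⁻¹) = [t₁] := ts_letter d hβi
        have hts1 : ts d (of (φ := φ) t₁ β⁻¹ * x) = [t₁] ++ s₁ :: rx := by
          rw [← hts0, ← hlx]
          refine ts_mul_of_ne d _ _ ?_
          rw [hts0, hlx]
          intro a ha b hb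
          have ha' : t₁ = a := by simpa using ha
          have hb' : s₁ = b := by simpa using hb
          subst ha'
          subst hb'
          exact fun hab => hs hab.symm
        have hts2 : ts d (h⁻¹ * x) = (t₁ :: r).reverse ++ s₁ :: rx := by
          rw [← hrev, ← hlx]
          refine ts_mul_of_ne d _ _ ?_
          rw [hrev, hlx, hrevlast]
          intro a ha b hb
          have ha' : t₁ = a := by simpa using ha
          have hb' : s₁ = b := by simpa using hb
          subst ha'
          subst hb'
          exact fun hab => hs hab.symm
        have hlastlx : (s₁ :: rx).getLast? = some (rx.getLast?.getD s₁) :=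
          getLast?_cons_eq s₁ rx
        rw [hts1, hts2,
          delta_pos_eq (i := !t₁) (j := wt) (l := [t₁] ++ s₁ :: rx)
            (a := t₁) (b := rx.getLast?.getD s₁) rfl
            (by rw [getLast?_append_right _ (by simp), hlastlx]),
          delta_pos_eq (i := j) (j := wt) (l := (t₁ :: r).reverse ++ s₁ :: rx)
            (a := tn) (b := rx.getLast?.getD s₁)
            (by rw [head?_append_left _ (by simp), hrevhead])
            (by rw [getLast?_append_right _ (by simp), hlastlx])]
        rw [hifm]
        simp only [List.length_append, List.length_cons, hrevlen, List.length_singleton, List.length_nil]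
        omega
  · -- Case A : first letter of h has type ≠ i; move to the vertex (!i, 1)
    rw [if_neg hti] at hd
    refine ⟨(!i, (1 : P φ)), ?_⟩
    rintro ⟨wt, x⟩
    simp only [dV, inv_one, one_mul]
    cases hlx : ts d x with
    | nil =>
      obtain ⟨cx, rfl⟩ := ts_eq_nil_imp d hlx
      have hts : ts d (h⁻¹ * base φ cx) = (t₁ :: r).reverse := by
        rw [ts_mul_baseR, hrev]
      by_cases hwt : i = wt
      · right
        rw [hts, delta_pos_eq (i := j) (j := wt) hrevhead hrevlast, hrevlen]
        rw [delta_nil]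
        rw [if_neg (fun hh : (!i) = wt => by
          rw [← hwt] at hh
          cases i <;> simp_all)]
        rw [if_neg (fun hh : t₁ = wt => hti (hh.trans hwt.symm))]
        omega
      · left
        rw [delta_nil, delta_nil, if_pos (bool_opp hwt), if_neg hwt]
    | cons s₁ rx =>
      have hlxlast : (s₁ :: rx).getLast? = some (rx.getLast?.getD s₁) := getLast?_cons_eq s₁ rx
      by_cases hs : s₁ = i
      · -- A2b : right disjunct
        right
        have hmul : ts d (h⁻¹ * x) = (t₁ :: r).reverse ++ (s₁ :: rx) := by
          rw [← hrev, ← hlx]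
          refine ts_mul_of_ne d _ _ ?_
          rw [hrev, hlx, hrevlast]
          intro a ha b hb
          have ha' : t₁ = a := by simpa using ha
          have hb' : s₁ = b := by simpa using hb
          subst ha'
          subst hb'
          rw [hs]
          exact hti
        rw [hmul]
        rw [delta_pos_eq (i := j) (j := wt) (l := (t₁ :: r).reverse ++ (s₁ :: rx))
          (a := tn) (b := rx.getLast?.getD s₁)
          (by rw [head?_append_left _ (by simp), hrevhead])
          (by rw [getLast?_append_right _ (by simp), hlxlast])]
        rw [delta_pos_eq (i := !i) (j := wt) (l := s₁ :: rx)
          (a := s₁) (b := rx.getLast?.getD s₁) rfl hlxlast]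
        have hif : (if s₁ = !i then 0 else 1) = 1 := by
          rw [hs]; cases i <;> simp
        rw [hif]
        simp only [List.length_append, hrevlen, List.length_cons]
        omega
      · -- A2a : left disjunct
        left
        rw [delta_pos_eq (i := !i) (j := wt) (l := s₁ :: rx)
          (a := s₁) (b := rx.getLast?.getD s₁) rfl hlxlast,
          delta_pos_eq (i := i) (j := wt) (l := s₁ :: rx)
          (a := s₁) (b := rx.getLast?.getD s₁) rfl hlxlast]
        rw [if_pos (bool_opp (Ne.symm hs)).symm, if_neg hs]
        omega

end AmalgamFin
-- part7 : main assembly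
namespace AmalgamFin

open Monoid Monoid.PushoutI Monoid.PushoutI.NormalWord Monoid.CoprodI Subgroup Function List

variable {G : Bool → Type*} [∀ i, Group (G i)] {H : Type*} [Group H]
  {φ : ∀ i, H →* G i} (d : Transversal φ)

theorem keyT' {u u' : Bool × P φ} (hd : 2 ≤ dV d u u') :
    ∃ m : Bool × P φ, ∀ w : Bool × P φ,
      dV d m w + 1 ≤ dV d u w ∨ dV d m w + 1 ≤ dV d u' w := by
  have hd' : 2 ≤ dV d (u.1, (1 : P φ)) (u'.1, u.2⁻¹ * u'.2) := by
    simpa only [dV, inv_one, one_mul] using hd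
  obtain ⟨m, hm⟩ := keyT d hd'
  refine ⟨(m.1, u.2 * m.2), ?_⟩
  intro w
  have h0 := hm (w.1, u.2⁻¹ * w.2)
  simpa only [dV, mul_inv_rev, mul_assoc, inv_one, one_mul, inv_inv,
    inv_mul_cancel_left, mul_inv_cancel_left] using h0

include d in
theorem main_aux (K : Subgroup (P φ)) (hK : Finite K) :
    ∃ (g : P φ) (i : Bool), ∀ x ∈ K, g * x * g⁻¹ ∈ (of (φ := φ) i).range := by
  classical
  have hfin : (K : Set (P φ)).Finite := Set.toFinite _
  set S : Finset (P φ) := hfin.toFinset with hSdef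
  have hmemS : ∀ {k : P φ}, k ∈ S ↔ k ∈ K := by
    intro k
    rw [hSdef, Set.Finite.mem_toFinset]
    exact SetLike.mem_coe
  set rf : Bool × P φ → ℕ := fun u => S.sup (fun k => dV d u (false, k)) with hrf
  have hne : (Set.range rf).Nonempty := ⟨rf (false, 1), Set.mem_range_self _⟩
  obtain ⟨⟨zi, zg⟩, hz⟩ := Nat.sInf_mem hne
  have hmin : ∀ u, rf (zi, zg) ≤ rf u := fun u => hz ▸ Nat.sInf_le ⟨u, rfl⟩
  have hS1 : (1 : P φ) ∈ S := hmemS.2 K.one_mem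
  -- the orbit of (zi, zg) under K stays at minimal radius
  have ha : ∀ k ∈ K, rf (zi, k * zg) ≤ rf (zi, zg) := by
    intro k hk
    refine Finset.sup_le ?_
    intro k' hk'
    have hk'K : k' ∈ K := hmemS.1 hk'
    have htr : dV d (zi, k * zg) (false, k') = dV d (zi, zg) (false, k⁻¹ * k') := by
      have h1 := dV_translate d k⁻¹ (zi, k * zg) (false, k')
      simp only [inv_mul_cancel_left] at h1
      exact h1.symm
    rw [htr]
    exact Finset.le_sup (f := fun k => dV d (zi, zg) (false, k))
      (hmemS.2 (K.mul_mem (K.inv_mem hk) hk'K))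
  -- every element of K moves the center by at most 1
  have hb : ∀ k ∈ K, dV d (zi, zg) (zi, k * zg) ≤ 1 := by
    intro k hk
    by_contra hcon
    push_neg at hcon
    obtain ⟨m, hm⟩ := keyT' d (u := (zi, zg)) (u' := (zi, k * zg)) hcon
    have hball : ∀ k' ∈ S, dV d m (false, k') + 1 ≤ rf (zi, zg) := by
      intro k' hk'
      rcases hm (false, k') with h1 | h1
      · exact le_trans h1 (Finset.le_sup (f := fun k => dV d (zi, zg) (false, k)) hk')
      · exact le_trans h1 (le_trans
          (Finset.le_sup (f := fun k'' => dV d (zi, k * zg) (false, k'')) hk') (ha k hk))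
    have hR1 : 1 ≤ rf (zi, zg) := by
      have := hball 1 hS1
      omega
    have hrm : rf m ≤ rf (zi, zg) - 1 := by
      refine Finset.sup_le ?_
      intro k' hk'
      have := hball k' hk'
      omega
    have := hmin m
    omega
  -- conclude: every element of K fixes the vertex (zi, zg)
  refine ⟨zg⁻¹, zi, ?_⟩
  intro x hx
  have hev := dV_same_even d zi zg (x * zg)
  have hle := hb x hx
  have h0 : dV d (zi, zg) (zi, x * zg) = 0 := by
    rcases hev with ⟨c, hc⟩
    omega
  have := dV_eq_zero d h0
  rw [← mul_assoc] at this
  simpa [mul_assoc] using this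

end AmalgamFin

/-- In an amalgamated free product `A ∗_C B`, every finite subgroup is conjugate to a
subgroup of (the canonical image of) `A` or of `B`. -/
theorem stmt_16 (G : Bool → Type*) [∀ i, Group (G i)] {H : Type*} [Group H]
    (φ : ∀ i, H →* G i) (hinj : ∀ i, Function.Injective (φ i))
    (K : Subgroup (Monoid.PushoutI φ)) (hK : Finite K) :
    ∃ (g : Monoid.PushoutI φ) (i : Bool),
      ∀ x ∈ K, g * x * g⁻¹ ∈ (Monoid.PushoutI.of (φ := φ) i).range := by
  obtain ⟨d⟩ := Monoid.PushoutI.NormalWord.transversal_nonempty φ hinj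
  exact AmalgamFin.main_aux d K hK
end
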